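/- For a finite plane tree τ with vertices u_0,...,u_{n-1} in depth-first-search order, the looptree distance from the root to any vertex u_j satisfies d_{Loop(τ)}(root, u_j) ≤ d_τ(root, u_j) + W_j(τ), where W(τ) is the Lukasiewicz path of τ. Consequently, height(Loop(τ)) ≤ height(τ) + max_{0≤j≤n} W_j(τ). -/

import Mathlib

/-- A finite rooted plane tree: a root together with an ordered list of subtrees. -/
inductive PlaneTree where
  | node : List PlaneTree → PlaneTree

namespace PlaneTree

/-- The list of children (subtrees) of the root. -/
def children : PlaneTree → List PlaneTree
  | .node ts => ts

mutual
/-- The vertices of a plane tree, encoded as positions (finite sequences of child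
indices), listed in depth-first-search (lexicographic) order; the root is `[]`. -/
def positions : PlaneTree → List (List ℕ)
  | .node ts => [] :: positionsList 0 ts

def positionsList : ℕ → List PlaneTree → List (List ℕ)
  | _, [] => []
  | i, t :: ts => (positions t).map (fun p => i :: p) ++ positionsList (i + 1) ts
end

/-- The subtree rooted at a given position, if the position is present. -/
def subtree? : PlaneTree → List ℕ → Option PlaneTree
  | t, [] => some t
  | t, i :: p =>
    match t.children[i]? with
    | some c => subtree? c p
    | none => none

/-- The outdegree (number of children) of the vertex at position `v`. -/
def out (t : PlaneTree) (v : List ℕ) : ℕ :=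
  match t.subtree? v with
  | some c => c.children.length
  | none => 0

/-- The Lukasiewicz path of a plane tree: `W 0 = 0` and
`W (j+1) = W j + out(u_j) - 1`, `u_j` being the `j`-th vertex in DFS order. -/
def luka (t : PlaneTree) : ℕ → ℤ
  | 0 => 0
  | j + 1 =>
    t.luka j +
      (match t.positions[j]? with
       | some v => (t.out v : ℤ) - 1
       | none => 0)

/-- The height of the tree: the maximal distance from the root, i.e. the maximal
length of a position. -/
def height (t : PlaneTree) : ℕ := (t.positions.map List.length).foldr max 0

/-- Adjacency in the looptree of `t`: two vertices are joined if they are adjacent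
siblings, or if one is the parent of the other and the child is the leftmost
(index `0`) or rightmost (index `out - 1`) child of the parent. -/
def loopAdj (t : PlaneTree) (v w : List ℕ) : Prop :=
  v ∈ t.positions ∧ w ∈ t.positions ∧
    ((∃ u i, v = u ++ [i] ∧ w = u ++ [i + 1]) ∨
      w = v ++ [0] ∨
      w = v ++ [t.out v - 1])

/-- The looptree of `t`, as a simple graph on positions. -/
def loopGraph (t : PlaneTree) : SimpleGraph (List ℕ) :=
  SimpleGraph.fromRel (loopAdj t)

/-- The graph distance from the root in the looptree of `t`. -/
noncomputable def loopDist (t : PlaneTree) (v : List ℕ) : ℕ :=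
  (loopGraph t).dist [] v

/-- The height of the looptree of `t`. -/
noncomputable def loopHeight (t : PlaneTree) : ℕ :=
  (t.positions.map (loopDist t)).foldr max 0

end PlaneTree
namespace PlaneTree

theorem strongInd {P : PlaneTree → Prop}
    (h : ∀ ts, (∀ c ∈ ts, P c) → P (.node ts)) : ∀ t, P t
  | .node ts => h ts (fun c _hc => strongInd h c)
termination_by t => sizeOf t
decreasing_by simp_wf; have := List.sizeOf_lt_of_mem _hc; omega

@[simp] lemma children_node (ts : List PlaneTree) : (node ts).children = ts := rfl

lemma positions_node (ts : List PlaneTree) :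
    (node ts).positions = [] :: positionsList 0 ts := rfl

@[simp] lemma positionsList_nil (i : ℕ) : positionsList i [] = [] := rfl

lemma positionsList_cons (i : ℕ) (c : PlaneTree) (ts : List PlaneTree) :
    positionsList i (c :: ts)
      = (positions c).map (fun p => i :: p) ++ positionsList (i+1) ts := rfl

@[simp] lemma subtree?_nil (t : PlaneTree) : t.subtree? [] = some t := rfl

lemma subtree?_cons (ts : List PlaneTree) (i : ℕ) (p : List ℕ) :
    (node ts).subtree? (i :: p) = match ts[i]? with
      | some c => c.subtree? p | none => none := rfl

lemma subtree?_cons_of (ts : List PlaneTree) (i : ℕ) {c : PlaneTree}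
    (h : ts[i]? = some c) (p : List ℕ) :
    (node ts).subtree? (i :: p) = c.subtree? p := by
  rw [subtree?_cons, h]

lemma out_def (t : PlaneTree) (v : List ℕ) :
    t.out v = match t.subtree? v with | some c => c.children.length | none => 0 := rfl

lemma out_nil (ts : List PlaneTree) : (node ts).out [] = ts.length := rfl

lemma out_cons (ts : List PlaneTree) (i : ℕ) {c : PlaneTree}
    (h : ts[i]? = some c) (p : List ℕ) :
    (node ts).out (i :: p) = c.out p := by
  rw [out_def, out_def, subtree?_cons_of ts i h]

lemma subtree?_append (u : List ℕ) : ∀ (t : PlaneTree) (v : List ℕ),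
    t.subtree? (u ++ v) = (t.subtree? u).bind (fun c => c.subtree? v) := by
  induction u with
  | nil => intro t v; simp
  | cons i p ih =>
    rintro ⟨ts⟩ v
    rw [List.cons_append, subtree?_cons, subtree?_cons]
    cases h : ts[i]? with
    | none => simp
    | some c => simp [ih]




lemma mem_positionsList {ts : List PlaneTree} {i : ℕ} {v : List ℕ} :
    v ∈ positionsList i ts ↔
      ∃ k c p, ts[k]? = some c ∧ p ∈ positions c ∧ v = (i + k) :: p := by
  induction ts generalizing i with
  | nil => simp
  | cons c ts ih =>
    rw [positionsList_cons]
    simp only [List.mem_append, List.mem_map, ih]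
    constructor
    · rintro (⟨p, hp, rfl⟩ | ⟨k, c', p, h1, h2, rfl⟩)
      · exact ⟨0, c, p, rfl, hp, by simp⟩
      · exact ⟨k+1, c', p, h1, h2, by rw [show i + (k+1) = i + 1 + k by omega]⟩
    · rintro ⟨k, c', p, h1, h2, rfl⟩
      cases k with
      | zero =>
        simp only [List.getElem?_cons_zero, Option.some.injEq] at h1
        subst h1
        exact Or.inl ⟨p, h2, by simp⟩
      | succ k =>
        simp only [List.getElem?_cons_succ] at h1
        exact Or.inr ⟨k, c', p, h1, h2, by rw [show i + 1 + k = i + (k+1) by omega]⟩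

lemma mem_positions_iff : ∀ (t : PlaneTree) (v : List ℕ),
    v ∈ t.positions ↔ (t.subtree? v).isSome := by
  refine strongInd ?_
  intro ts ih v
  rw [positions_node]
  cases v with
  | nil => simp
  | cons k p =>
    rw [List.mem_cons]
    have h0 : ¬ ((k :: p : List ℕ) = []) := by simp
    rw [or_iff_right h0, mem_positionsList, subtree?_cons]
    constructor
    · intro hex
      obtain ⟨kk, c, pp, h1, h2, heq⟩ := hex
      obtain ⟨heq1, heq2⟩ := List.cons.injEq .. ▸ heq
      subst heq2
      have hk : kk = k := by omega
      subst hk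
      rw [h1]
      exact (ih c (List.mem_of_getElem? h1) p).mp h2
    · intro h
      cases hg : ts[k]? with
      | none => rw [hg] at h; simp at h
      | some c =>
        rw [hg] at h
        exact ⟨k, c, p, by simpa using hg, (ih c (List.mem_of_getElem? hg) p).mpr h, by simp⟩

def pathW : PlaneTree → List ℕ → ℤ
  | _, [] => 0
  | node ts, i :: p =>
    match h : ts[i]? with
    | some c => ((ts.length : ℤ) - i) + pathW c p
    | none => 0
termination_by t _ => sizeOf t
decreasing_by simp_wf; have := List.sizeOf_lt_of_mem (List.mem_of_getElem? h); omega

@[simp] lemma pathW_nil (t : PlaneTree) : pathW t [] = 0 := by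
  cases t; rw [pathW]

lemma pathW_cons (ts : List PlaneTree) {i : ℕ} {c : PlaneTree}
    (h : ts[i]? = some c) (p : List ℕ) :
    pathW (node ts) (i :: p) = ((ts.length : ℤ) - i) + pathW c p := by
  rw [pathW, h]

lemma pathW_concat : ∀ (t : PlaneTree) (u : List ℕ) (k : ℕ),
    (t.subtree? u).isSome → k < t.out u →
    pathW t (u ++ [k]) = pathW t u + ((t.out u : ℤ) - k) := by
  intro t u
  induction u generalizing t with
  | nil =>
    intro k _ hk
    rcases t with ⟨ts⟩
    rw [out_nil] at hk ⊢
    cases hg : ts[k]? with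
    | none => exact absurd (List.getElem?_eq_none_iff.mp hg) (by omega)
    | some c =>
      rw [List.nil_append, pathW_cons ts hg, pathW_nil, pathW_nil]
      ring
  | cons i p ih =>
    intro k hs hk
    rcases t with ⟨ts⟩
    cases hg : ts[i]? with
    | none =>
      exfalso
      rw [subtree?_cons, hg] at hs
      simp at hs
    | some c =>
      rw [subtree?_cons_of ts i hg] at hs
      rw [out_cons ts i hg] at hk ⊢
      rw [List.cons_append, pathW_cons ts hg, pathW_cons ts hg, ih c k hs hk]
      ring

def wsum (t : PlaneTree) (l : List (List ℕ)) : ℤ :=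
  (l.map (fun v => (t.out v : ℤ) - 1)).sum

@[simp] lemma wsum_nil (t : PlaneTree) : wsum t [] = 0 := rfl

lemma wsum_cons (t : PlaneTree) (v : List ℕ) (l : List (List ℕ)) :
    wsum t (v :: l) = ((t.out v : ℤ) - 1) + wsum t l := by simp [wsum]

lemma wsum_append (t : PlaneTree) (l1 l2 : List (List ℕ)) :
    wsum t (l1 ++ l2) = wsum t l1 + wsum t l2 := by simp [wsum]

lemma wsum_map_cons (ts : List PlaneTree) {i : ℕ} {c : PlaneTree}
    (h : ts[i]? = some c) (l : List (List ℕ)) :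
    wsum (node ts) (l.map (fun p => i :: p)) = wsum c l := by
  rw [wsum, wsum, List.map_map]
  congr 1
  refine List.map_congr_left (fun v _ => ?_)
  simp only [Function.comp_apply]
  rw [out_cons ts i h]

lemma luka_eq_wsum (t : PlaneTree) : ∀ j, j ≤ t.positions.length →
    t.luka j = wsum t (t.positions.take j)
  | 0, _ => by simp [luka]
  | j+1, h => by
    cases hv : t.positions[j]? with
    | none =>
      exfalso
      have := List.getElem?_eq_none_iff.mp hv
      omega
    | some v =>
      have hv2 : t.positions[j]? = some v := by exact hv
      rw [luka, luka_eq_wsum t j (by omega), hv, List.take_succ, hv2,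
        Option.toList_some, wsum_append, wsum_cons, wsum_nil]
      ring

lemma wsum_positionsList_complete (ts0 : List PlaneTree) :
    ∀ (ts : List PlaneTree) (i : ℕ),
      (∀ k c, ts[k]? = some c → ts0[(i + k)]? = some c) →
      (∀ c ∈ ts, wsum c c.positions = -1) →
      wsum (node ts0) (positionsList i ts) = -(ts.length : ℤ) := by
  intro ts
  induction ts with
  | nil => intro i _ _; simp
  | cons c ts ih =>
    intro i hsub hC
    have h0 : ts0[i]? = some c := by
      have := hsub 0 c rfl; simpa using this
    have hsub' : ∀ k c', ts[k]? = some c' → ts0[(i + 1 + k)]? = some c' := by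
      intro k c' h
      rw [show i + 1 + k = i + (k+1) by omega]
      exact hsub (k+1) c' h
    rw [positionsList_cons, wsum_append, wsum_map_cons ts0 h0,
      hC c (List.mem_cons_self (a := c) (l := ts)),
      ih (i+1) hsub' (fun c' h => hC c' (List.mem_cons_of_mem _ h))]
    simp only [List.length_cons]
    push_cast
    ring

lemma wsum_positionsList_take (ts0 : List PlaneTree) :
    ∀ (ts : List PlaneTree) (i j : ℕ) (v : List ℕ),
      (∀ k c, ts[k]? = some c → ts0[(i + k)]? = some c) →
      (∀ c ∈ ts, ∀ j' v', c.positions[j']? = some v' →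
          wsum c (c.positions.take j') = pathW c v' - v'.length) →
      (∀ c ∈ ts, wsum c c.positions = -1) →
      (positionsList i ts)[j]? = some v →
      wsum (node ts0) ((positionsList i ts).take j)
        = pathW (node ts0) v - v.length + 1 - ((ts0.length : ℤ) - i) := by
  intro ts
  induction ts with
  | nil => intro i j v _ _ _ hv; simp at hv
  | cons c ts ih =>
    intro i j v hsub hL hC hv
    have h0 : ts0[i]? = some c := by
      have := hsub 0 c rfl; simpa using this
    have hsub' : ∀ k c', ts[k]? = some c' → ts0[(i + 1 + k)]? = some c' := by
      intro k c' h
      rw [show i + 1 + k = i + (k+1) by omega]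
      exact hsub (k+1) c' h
    have hlenA : ((c.positions).map (fun p => i :: p)).length = c.positions.length := by
      simp
    rw [positionsList_cons] at hv ⊢
    rw [List.take_append, wsum_append]
    by_cases hj : j < ((c.positions).map (fun p => i :: p)).length
    · rw [List.getElem?_append_left hj, List.getElem?_map] at hv
      cases hp : (positions c)[j]? with
      | none => rw [hp] at hv; simp at hv
      | some p =>
        rw [hp] at hv
        simp only [Option.map_some] at hv
        obtain rfl : v = i :: p := by rw [← Option.some_inj]; exact hv.symm
        rw [show j - ((c.positions).map (fun p => i :: p)).length = 0 by omega,
          List.take_zero, wsum_nil, ← List.map_take, wsum_map_cons ts0 h0,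
          hL c (List.mem_cons_self (a := c) (l := ts)) j p hp, pathW_cons ts0 h0]
        simp only [List.length_cons]
        push_cast
        ring
    · push_neg at hj
      rw [List.getElem?_append_right hj] at hv
      rw [List.take_of_length_le hj, wsum_map_cons ts0 h0,
        hC c (List.mem_cons_self (a := c) (l := ts)),
        ih (i+1) (j - ((c.positions).map (fun p => i :: p)).length) v hsub'
          (fun c' h => hL c' (List.mem_cons_of_mem _ h))
          (fun c' h => hC c' (List.mem_cons_of_mem _ h)) hv]
      push_cast
      ring

lemma main_wsum : ∀ t : PlaneTree,
    (∀ j v, t.positions[j]? = some v →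
        wsum t (t.positions.take j) = pathW t v - v.length) ∧
    wsum t t.positions = -1 := by
  refine strongInd ?_
  intro ts ih
  have hsub : ∀ k c, ts[k]? = some c → ts[(0 + k)]? = some c := by
    intro k c h; simpa using h
  have hL := fun c hc => (ih c hc).1
  have hC := fun c hc => (ih c hc).2
  constructor
  · intro j v hv
    rw [positions_node] at hv ⊢
    cases j with
    | zero =>
      simp only [List.getElem?_cons_zero, Option.some.injEq] at hv
      subst hv
      simp
    | succ j =>
      have h1 : ([] :: positionsList 0 ts).take (j+1)
          = [] :: (positionsList 0 ts).take j := rfl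
      have h2 : ([] :: positionsList 0 ts)[(j+1)]?
          = (positionsList 0 ts)[j]? := rfl
      rw [h2] at hv
      rw [h1, wsum_cons, wsum_positionsList_take ts ts 0 j v hsub hL hC hv, out_nil]
      push_cast
      ring
  · rw [positions_node, wsum_cons, wsum_positionsList_complete ts ts 0 hsub hC, out_nil]
    push_cast
    ring

lemma mem_positions_append {t : PlaneTree} {u : List ℕ} {c : PlaneTree} {k : ℕ}
    (hc : t.subtree? u = some c) (hk : k < c.children.length) :
    u ++ [k] ∈ t.positions := by
  rw [mem_positions_iff, subtree?_append, hc, Option.bind_some]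
  rcases c with ⟨cs⟩
  rw [subtree?_cons]
  cases hg : cs[k]? with
  | none => exact absurd (List.getElem?_eq_none_iff.mp hg) (by simp at hk ⊢; omega)
  | some d => simp

lemma out_eq_of_subtree {t : PlaneTree} {u : List ℕ} {c : PlaneTree}
    (hc : t.subtree? u = some c) : t.out u = c.children.length := by
  rw [out_def, hc]

lemma adj_sibling {t : PlaneTree} {u : List ℕ} {k : ℕ}
    (h1 : u ++ [k] ∈ t.positions) (h2 : u ++ [k+1] ∈ t.positions) :
    (t.loopGraph).Adj (u ++ [k+1]) (u ++ [k]) := by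
  rw [loopGraph, SimpleGraph.fromRel_adj]
  refine ⟨?_, Or.inr ⟨h1, h2, Or.inl ⟨u, k, rfl, rfl⟩⟩⟩
  intro h
  have := List.append_cancel_left h
  simp at this

lemma adj_parent_right {t : PlaneTree} {u : List ℕ}
    (hu : u ∈ t.positions) (h : u ++ [t.out u - 1] ∈ t.positions) :
    (t.loopGraph).Adj u (u ++ [t.out u - 1]) := by
  rw [loopGraph, SimpleGraph.fromRel_adj]
  exact ⟨by simp, Or.inl ⟨hu, h, Or.inr (Or.inr rfl)⟩⟩

lemma walk_to_child {t : PlaneTree} {u : List ℕ} {c : PlaneTree}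
    (hc : t.subtree? u = some c) :
    ∀ m k, k + m + 1 = c.children.length →
      ∃ w : (t.loopGraph).Walk u (u ++ [k]), w.length = m + 1 := by
  have hu : u ∈ t.positions := (mem_positions_iff t u).mpr (by rw [hc]; rfl)
  intro m
  induction m with
  | zero =>
    intro k hk
    have hk' : k = t.out u - 1 := by rw [out_eq_of_subtree hc]; omega
    have hmem : u ++ [k] ∈ t.positions := mem_positions_append hc (by omega)
    subst hk'
    exact ⟨(adj_parent_right hu hmem).toWalk, rfl⟩
  | succ m ih =>
    intro k hk
    obtain ⟨w, hw⟩ := ih (k+1) (by omega)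
    have h1 : u ++ [k] ∈ t.positions := mem_positions_append hc (by omega)
    have h2 : u ++ [k+1] ∈ t.positions := mem_positions_append hc (by omega)
    exact ⟨w.concat (adj_sibling h1 h2), by simp [hw]⟩

lemma exists_walk (t : PlaneTree) : ∀ v, (t.subtree? v).isSome →
    ∃ w : (t.loopGraph).Walk [] v, (w.length : ℤ) ≤ pathW t v := by
  intro v
  induction v using List.reverseRecOn with
  | nil => intro _; exact ⟨.nil, by simp⟩
  | append_singleton u k ih =>
    intro h
    rw [subtree?_append] at h
    cases hc : t.subtree? u with
    | none => rw [hc] at h; simp at h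
    | some c =>
      rw [hc, Option.bind_some] at h
      have hk : k < c.children.length := by
        rcases c with ⟨cs⟩
        rw [subtree?_cons] at h
        cases hg : cs[k]? with
        | none => rw [hg] at h; simp at h
        | some d =>
          obtain ⟨hlt, -⟩ := List.getElem?_eq_some_iff.mp hg
          simpa using hlt
      obtain ⟨w1, hw1⟩ := ih (by rw [hc]; rfl)
      obtain ⟨w2, hw2⟩ := walk_to_child hc (c.children.length - 1 - k) k (by omega)
      refine ⟨w1.append w2, ?_⟩
      rw [SimpleGraph.Walk.length_append, hw2,
        pathW_concat t u k (by rw [hc]; rfl) (by rw [out_eq_of_subtree hc]; omega),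
        out_eq_of_subtree hc]
      push_cast
      omega

lemma le_foldr_max {l : List ℕ} {x : ℕ} (hx : x ∈ l) : x ≤ l.foldr max 0 := by
  induction l with
  | nil => cases hx
  | cons a l ih =>
    rcases List.mem_cons.mp hx with rfl | hx
    · exact le_max_left _ _
    · exact le_trans (ih hx) (le_max_right _ _)

lemma foldr_max_le {l : List ℕ} {M : ℤ} (h0 : 0 ≤ M) (h : ∀ x ∈ l, (x : ℤ) ≤ M) :
    ((l.foldr max 0 : ℕ) : ℤ) ≤ M := by
  induction l with
  | nil => simpa
  | cons a l ih =>
    have h1 := ih (fun x hx => h x (List.mem_cons_of_mem _ hx))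
    have h2 := h a (List.mem_cons_self)
    simp only [List.foldr_cons]
    rw [Nat.cast_max]
    exact max_le h2 h1

end PlaneTree

open PlaneTree in
/-- For a finite plane tree `τ` with vertices `u_0, ..., u_{n-1}` in DFS order, the
looptree distance from the root to `u_j` is at most `d_τ(root, u_j) + W_j(τ)`, where
`W(τ)` is the Lukasiewicz path; consequently
`height(Loop(τ)) ≤ height(τ) + max_{0 ≤ j ≤ n} W_j(τ)`. -/
theorem stmt1 (t : PlaneTree) :
    (∀ (j : ℕ) (v : List ℕ), t.positions[j]? = some v →
      (t.loopDist v : ℤ) ≤ (v.length : ℤ) + t.luka j) ∧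
    (t.loopHeight : ℤ) ≤ (t.height : ℤ) +
      (Finset.range (t.positions.length + 1)).sup' Finset.nonempty_range_add_one t.luka := by
  have key : ∀ (j : ℕ) (v : List ℕ), t.positions[j]? = some v →
      (t.loopDist v : ℤ) ≤ (v.length : ℤ) + t.luka j := by
    intro j v hv
    obtain ⟨hj, -⟩ := List.getElem?_eq_some_iff.mp hv
    have hmem : v ∈ t.positions := List.mem_of_getElem? hv
    obtain ⟨w, hw⟩ := exists_walk t v ((mem_positions_iff t v).mp hmem)
    have hdist : (t.loopDist v : ℤ) ≤ (w.length : ℤ) := by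
      exact_mod_cast SimpleGraph.dist_le w
    have hluka : t.luka j = pathW t v - v.length := by
      rw [luka_eq_wsum t j (le_of_lt hj)]
      exact (main_wsum t).1 j v hv
    rw [hluka]
    linarith
  refine ⟨key, ?_⟩
  have hS : (0:ℤ) ≤ (Finset.range (t.positions.length + 1)).sup'
      Finset.nonempty_range_add_one t.luka := by
    have := Finset.le_sup' t.luka (Finset.mem_range.mpr (by omega :
      0 < t.positions.length + 1))
    rw [show t.luka 0 = 0 from rfl] at this
    exact this
  rw [loopHeight]
  refine foldr_max_le (by positivity) ?_
  intro x hx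
  obtain ⟨v, hvmem, rfl⟩ := List.mem_map.mp hx
  obtain ⟨j, hj⟩ := List.getElem?_of_mem hvmem
  obtain ⟨hjn, -⟩ := List.getElem?_eq_some_iff.mp hj
  have h1 := key j v hj
  have h2 : (v.length : ℤ) ≤ (t.height : ℤ) := by
    have : v.length ≤ t.height :=
      le_foldr_max (List.mem_map_of_mem (f := List.length) hvmem)
    exact_mod_cast this
  have h3 : t.luka j ≤ (Finset.range (t.positions.length + 1)).sup'
      Finset.nonempty_range_add_one t.luka :=
    Finset.le_sup' t.luka (Finset.mem_range.mpr (by omega))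
  linarith
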